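/- Let (X_n, Y_n) be the arithmetic coding interval endpoints under i.i.d. Bernoulli(p) bits. Then the vector of second mixed moments satisfies the linear recurrence (E[X_{n+1}²], E[X_{n+1}Y_{n+1}], E[Y_{n+1}²])ᵀ = W_2 · (E[X_n²], E[X_nY_n], E[Y_n²])ᵀ, where W_2 = [[p³+q, 2p²q, pq²], [pq, p²+q², pq], [p²q, 2pq², p+q³]]. -/

import Mathlib

open MeasureTheory ProbabilityTheory Matrix

lemma aux_integrable {Ω : Type*} [MeasurableSpace Ω] (μ : Measure Ω) [IsProbabilityMeasure μ]
    {f : Ω → ℝ} (hf : Measurable f) {C : ℝ} (hC : ∀ ω, |f ω| ≤ C) : Integrable f μ :=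
  (integrable_const C).mono' hf.aestronglyMeasurable
    (Filter.Eventually.of_forall (by simpa [Real.norm_eq_abs] using hC))

lemma aux_ind_integral {Ω : Type*} [MeasurableSpace Ω] (μ : Measure Ω) [IsProbabilityMeasure μ]
    (b : Ω → Bool) (hb : Measurable b) :
    ∫ ω, (if b ω then (1:ℝ) else 0) ∂μ = (μ {ω | b ω = true}).toReal := by
  have hs : MeasurableSet {ω | b ω = true} := hb (measurableSet_singleton true)
  have h : (fun ω => if b ω then (1:ℝ) else 0)
      = Set.indicator {ω | b ω = true} (fun _ => (1:ℝ)) := by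
    funext ω
    simp [Set.indicator_apply, Set.mem_setOf_eq]
  rw [h, integral_indicator_const (1:ℝ) hs]
  simp
  rfl

lemma aux_mul_ind {Ω : Type*} [MeasurableSpace Ω] (μ : Measure Ω) [IsProbabilityMeasure μ]
    (b : Ω → Bool) (hb : Measurable b) (f : Ω → ℝ) (hf : Measurable f)
    (hind : IndepFun f b μ) :
    ∫ ω, (if b ω then (1:ℝ) else 0) * f ω ∂μ
      = (μ {ω | b ω = true}).toReal * ∫ ω, f ω ∂μ := by
  have hφ : Measurable (fun x : Bool => if x then (1:ℝ) else 0) := measurable_of_countable _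
  have h2 : IndepFun (fun ω => if b ω then (1:ℝ) else 0) f μ :=
    (hind.symm).comp hφ measurable_id
  calc ∫ ω, (if b ω then (1:ℝ) else 0) * f ω ∂μ
      = integral μ ((fun ω => if b ω then (1:ℝ) else 0) * f) := rfl
    _ = (∫ ω, (if b ω then (1:ℝ) else 0) ∂μ) * ∫ ω, f ω ∂μ :=
        h2.integral_mul_eq_mul_integral (hφ.comp hb).aestronglyMeasurable hf.aestronglyMeasurable
    _ = (μ {ω | b ω = true}).toReal * ∫ ω, f ω ∂μ := by rw [aux_ind_integral μ b hb]

lemma aux_split {Ω : Type*} [MeasurableSpace Ω] (μ : Measure Ω) [IsProbabilityMeasure μ]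
    (b : Ω → Bool) (hb : Measurable b) (f g : Ω → ℝ) (hf : Measurable f) (hg : Measurable g)
    {Cf Cg : ℝ} (hfC : ∀ ω, |f ω| ≤ Cf) (hgC : ∀ ω, |g ω| ≤ Cg)
    (hif : IndepFun f b μ) (hig : IndepFun g b μ) :
    ∫ ω, (if b ω then f ω else g ω) ∂μ
      = (μ {ω | b ω = true}).toReal * ∫ ω, f ω ∂μ
        + (1 - (μ {ω | b ω = true}).toReal) * ∫ ω, g ω ∂μ := by
  have hptw : ∀ ω, (if b ω then f ω else g ω)
      = (if b ω then (1:ℝ) else 0) * f ω + (g ω - (if b ω then (1:ℝ) else 0) * g ω) := by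
    intro ω; cases hB : b ω <;> simp
  have hintf : Integrable f μ := aux_integrable μ hf hfC
  have hintg : Integrable g μ := aux_integrable μ hg hgC
  have hbdd : ∃ C, ∀ ω, ‖(if b ω then (1:ℝ) else 0)‖ ≤ C :=
    ⟨1, fun ω => by cases hB : b ω <;> simp⟩
  have hφ : Measurable (fun x : Bool => if x then (1:ℝ) else 0) := measurable_of_countable _
  have int1 : Integrable (fun ω => (if b ω then (1:ℝ) else 0) * f ω) μ :=
    hintf.bdd_mul (hφ.comp hb).aestronglyMeasurable (Filter.Eventually.of_forall hbdd.choose_spec)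
  have int2 : Integrable (fun ω => (if b ω then (1:ℝ) else 0) * g ω) μ :=
    hintg.bdd_mul (hφ.comp hb).aestronglyMeasurable (Filter.Eventually.of_forall hbdd.choose_spec)
  have h1 : ∫ ω, ((if b ω then (1:ℝ) else 0) * f ω
        + (g ω - (if b ω then (1:ℝ) else 0) * g ω)) ∂μ
      = (∫ ω, (if b ω then (1:ℝ) else 0) * f ω ∂μ)
        + ∫ ω, (g ω - (if b ω then (1:ℝ) else 0) * g ω) ∂μ :=
    integral_add int1 (hintg.sub int2)
  have h2 : ∫ ω, (g ω - (if b ω then (1:ℝ) else 0) * g ω) ∂μ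
      = (∫ ω, g ω ∂μ) - ∫ ω, (if b ω then (1:ℝ) else 0) * g ω ∂μ :=
    integral_sub hintg int2
  rw [integral_congr_ae (Filter.Eventually.of_forall hptw), h1, h2,
    aux_mul_ind μ b hb f hf hif, aux_mul_ind μ b hb g hg hig]
  ring

theorem second_moments_recurrence
    (p : ℝ) (hp : p ∈ Set.Ioo (0:ℝ) 1) (q : ℝ) (hq : q = 1 - p)
    {Ω : Type*} [MeasurableSpace Ω] (μ : Measure Ω) [IsProbabilityMeasure μ]
    (B : ℕ → Ω → Bool) (hBmeas : ∀ n, Measurable (B n))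
    (hBindep : iIndepFun B μ)
    (hBdist : ∀ n, μ {ω | B n ω = true} = ENNReal.ofReal p)
    (X Y : ℕ → Ω → ℝ)
    (hX0 : ∀ ω, X 0 ω = 0) (hY0 : ∀ ω, Y 0 ω = 1)
    (hstep : ∀ n ω, (X (n + 1) ω, Y (n + 1) ω) =
      if B n ω then (X n ω + q * (Y n ω - X n ω), Y n ω)
      else (X n ω, X n ω + q * (Y n ω - X n ω))) :
    ∀ n, ![∫ ω, (X (n + 1) ω) ^ 2 ∂μ, ∫ ω, X (n + 1) ω * Y (n + 1) ω ∂μ,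
            ∫ ω, (Y (n + 1) ω) ^ 2 ∂μ]
      = (!![p ^ 3 + q, 2 * p ^ 2 * q, p * q ^ 2;
            p * q, p ^ 2 + q ^ 2, p * q;
            p ^ 2 * q, 2 * p * q ^ 2, p + q ^ 3]).mulVec
          ![∫ ω, (X n ω) ^ 2 ∂μ, ∫ ω, X n ω * Y n ω ∂μ, ∫ ω, (Y n ω) ^ 2 ∂μ] := by
  subst hq
  obtain ⟨hp0, hp1⟩ := hp
  set q : ℝ := 1 - p with hq
  have hq0 : 0 < q := by rw [hq]; linarith
  have hq1 : q < 1 := by rw [hq]; linarith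
  -- pointwise step formulas
  have hXe : ∀ n ω, X (n + 1) ω
      = if B n ω then X n ω + q * (Y n ω - X n ω) else X n ω := by
    intro n ω
    have h := hstep n ω
    cases hb : B n ω <;> rw [hb] at h <;> simpa using congrArg Prod.fst h
  have hYe : ∀ n ω, Y (n + 1) ω
      = if B n ω then Y n ω else X n ω + q * (Y n ω - X n ω) := by
    intro n ω
    have h := hstep n ω
    cases hb : B n ω <;> rw [hb] at h <;> simpa using congrArg Prod.snd h
  -- bounds
  have hbnd : ∀ n ω, 0 ≤ X n ω ∧ X n ω ≤ Y n ω ∧ Y n ω ≤ 1 := by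
    intro n
    induction n with
    | zero => intro ω; simp [hX0, hY0]
    | succ n ih =>
      intro ω
      obtain ⟨h1, h2, h3⟩ := ih ω
      have h := hstep n ω
      cases hb : B n ω <;> rw [hb] at h <;> simp only [if_true, if_false,
          Bool.false_eq_true, Prod.mk.injEq, if_neg, not_false_iff] at h <;>
        obtain ⟨e1, e2⟩ := h <;> rw [e1, e2] <;>
        refine ⟨?_, ?_, ?_⟩ <;> nlinarith
  -- measurability
  have hmeas : ∀ n, Measurable (X n) ∧ Measurable (Y n) := by
    intro n
    induction n with
    | zero =>
      constructor
      · have : X 0 = fun _ => (0:ℝ) := funext hX0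
        rw [this]; exact measurable_const
      · have : Y 0 = fun _ => (1:ℝ) := funext hY0
        rw [this]; exact measurable_const
    | succ n ih =>
      obtain ⟨hXm, hYm⟩ := ih
      have hset : MeasurableSet {ω | B n ω = true} :=
        hBmeas n (measurableSet_singleton true)
      have hZ : Measurable (fun ω => X n ω + q * (Y n ω - X n ω)) := by
        exact hXm.add (measurable_const.mul (hYm.sub hXm))
      constructor
      · have : X (n + 1) = fun ω => if B n ω then X n ω + q * (Y n ω - X n ω) else X n ω :=
          funext (hXe n)
        rw [this]; exact Measurable.ite hset hZ hXm
      · have : Y (n + 1) = fun ω => if B n ω then Y n ω else X n ω + q * (Y n ω - X n ω) :=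
          funext (hYe n)
        rw [this]; exact Measurable.ite hset hYm hZ
  -- representation as a function of the first n bits
  have hrep : ∀ n, ∃ g : ({i // i ∈ Finset.range n} → Bool) → ℝ × ℝ,
      ∀ ω, (X n ω, Y n ω) = g (fun i => B i.1 ω) := by
    intro n
    induction n with
    | zero => exact ⟨fun _ => (0, 1), fun ω => by rw [hX0, hY0]⟩
    | succ n ih =>
      obtain ⟨g, hg⟩ := ih
      refine ⟨fun v =>
        (fun z : ℝ × ℝ => if v ⟨n, Finset.self_mem_range_succ n⟩ then
            (z.1 + q * (z.2 - z.1), z.2) else (z.1, z.1 + q * (z.2 - z.1)))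
          (g (fun i => v ⟨i.1, Finset.mem_range_succ_iff.mpr
              (Nat.le_of_lt (Finset.mem_range.mp i.2))⟩)), ?_⟩
      intro ω
      rw [hstep n ω]
      simp only [← hg ω]
  -- independence of (X n, Y n) and B n
  have hindep : ∀ n, IndepFun (fun ω => (X n ω, Y n ω)) (B n) μ := by
    intro n
    obtain ⟨g, hg⟩ := hrep n
    have hdisj : Disjoint (Finset.range n) ({n} : Finset ℕ) := by simp
    have h := hBindep.indepFun_finset (Finset.range n) {n} hdisj hBmeas
    have h2 := h.comp (measurable_of_countable g)
      (measurable_of_countable (fun v : {i // i ∈ ({n} : Finset ℕ)} → Bool =>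
        v ⟨n, Finset.mem_singleton_self n⟩))
    have e1 : (fun ω => (X n ω, Y n ω))
        = g ∘ (fun a (i : {i // i ∈ Finset.range n}) => B i.1 a) := funext fun ω => hg ω
    rw [e1]
    exact h2
  intro n
  -- abbreviations
  set a := ∫ ω, (X n ω) ^ 2 ∂μ with ha
  set bb := ∫ ω, X n ω * Y n ω ∂μ with hbb
  set c := ∫ ω, (Y n ω) ^ 2 ∂μ with hc
  obtain ⟨hXm, hYm⟩ := hmeas n
  have hZm : Measurable (fun ω => X n ω + q * (Y n ω - X n ω)) :=
    hXm.add (measurable_const.mul (hYm.sub hXm))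
  have hpB : (μ {ω | B n ω = true}).toReal = p := by
    rw [hBdist n, ENNReal.toReal_ofReal hp0.le]
  -- bounds for the relevant functions
  have hZbnd : ∀ ω, 0 ≤ X n ω + q * (Y n ω - X n ω)
      ∧ X n ω + q * (Y n ω - X n ω) ≤ 1 := by
    intro ω
    obtain ⟨h1, h2, h3⟩ := hbnd n ω
    constructor <;> nlinarith
  have habs : ∀ (u : Ω → ℝ), (∀ ω, 0 ≤ u ω ∧ u ω ≤ 1) →
      ∀ (w : Ω → ℝ), (∀ ω, 0 ≤ w ω ∧ w ω ≤ 1) → ∀ ω, |u ω * w ω| ≤ 1 := by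
    intro u hu w hw ω
    obtain ⟨h1, h2⟩ := hu ω
    obtain ⟨h3, h4⟩ := hw ω
    rw [abs_le]; constructor <;> nlinarith
  have hXrng : ∀ ω, 0 ≤ X n ω ∧ X n ω ≤ 1 := fun ω => by
    obtain ⟨h1, h2, h3⟩ := hbnd n ω; exact ⟨h1, le_trans h2 h3⟩
  have hYrng : ∀ ω, 0 ≤ Y n ω ∧ Y n ω ≤ 1 := fun ω => by
    obtain ⟨h1, h2, h3⟩ := hbnd n ω; exact ⟨le_trans h1 h2, h3⟩
  -- independence specializations
  have hIF : ∀ F : ℝ × ℝ → ℝ, Measurable F →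
      IndepFun (fun ω => F (X n ω, Y n ω)) (B n) μ := fun F hF =>
    (hindep n).comp hF measurable_id
  -- integrability of the basic moments
  have intXX : Integrable (fun ω => (X n ω) ^ 2) μ :=
    aux_integrable μ (hXm.pow_const 2)
      (fun ω => by simpa [pow_two] using habs _ hXrng _ hXrng ω)
  have intXY : Integrable (fun ω => X n ω * Y n ω) μ :=
    aux_integrable μ (hXm.mul hYm) (habs _ hXrng _ hYrng)
  have intYY : Integrable (fun ω => (Y n ω) ^ 2) μ :=
    aux_integrable μ (hYm.pow_const 2)
      (fun ω => by simpa [pow_two] using habs _ hYrng _ hYrng ω)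
  -- generic evaluation of ∫ (α X² + β XY + γ Y²)
  have hlin : ∀ α β γ : ℝ,
      ∫ ω, (α * (X n ω) ^ 2 + β * (X n ω * Y n ω) + γ * (Y n ω) ^ 2) ∂μ
        = α * a + β * bb + γ * c := by
    intro α β γ
    have h1 : ∫ ω, ((α * (X n ω) ^ 2 + β * (X n ω * Y n ω)) + γ * (Y n ω) ^ 2) ∂μ
        = (∫ ω, (α * (X n ω) ^ 2 + β * (X n ω * Y n ω)) ∂μ)
          + ∫ ω, γ * (Y n ω) ^ 2 ∂μ :=
      integral_add ((intXX.const_mul α).add (intXY.const_mul β)) (intYY.const_mul γ)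
    have h2 : ∫ ω, (α * (X n ω) ^ 2 + β * (X n ω * Y n ω)) ∂μ
        = (∫ ω, α * (X n ω) ^ 2 ∂μ) + ∫ ω, β * (X n ω * Y n ω) ∂μ :=
      integral_add (intXX.const_mul α) (intXY.const_mul β)
    rw [h1, h2, integral_const_mul, integral_const_mul, integral_const_mul]
  -- the three split computations
  have key : ∀ (f g : Ω → ℝ) (F G : ℝ × ℝ → ℝ), Measurable F → Measurable G →
      (∀ ω, f ω = F (X n ω, Y n ω)) → (∀ ω, g ω = G (X n ω, Y n ω)) →
      (∀ ω, |f ω| ≤ 1) → (∀ ω, |g ω| ≤ 1) →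
      ∫ ω, (if B n ω then f ω else g ω) ∂μ
        = p * (∫ ω, f ω ∂μ) + q * ∫ ω, g ω ∂μ := by
    intro f g F G hF hG hfF hgG hFb hGb
    have hfe : f = fun ω => F (X n ω, Y n ω) := funext hfF
    have hge : g = fun ω => G (X n ω, Y n ω) := funext hgG
    have hfm : Measurable f := by rw [hfe]; exact hF.comp (hXm.prodMk hYm)
    have hgm : Measurable g := by rw [hge]; exact hG.comp (hXm.prodMk hYm)
    have hif : IndepFun f (B n) μ := by rw [hfe]; exact hIF F hF
    have hig : IndepFun g (B n) μ := by rw [hge]; exact hIF G hG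
    have := aux_split μ (B n) (hBmeas n) f g hfm hgm hFb hGb hif hig
    rw [this, hpB, hq]
  -- integrals of the transformed quadratics
  have hZZ : ∫ ω, (X n ω + q * (Y n ω - X n ω)) ^ 2 ∂μ
      = p ^ 2 * a + 2 * p * q * bb + q ^ 2 * c := by
    have h := hlin (p ^ 2) (2 * p * q) (q ^ 2)
    rw [← h]
    refine integral_congr_ae (Filter.Eventually.of_forall fun ω => ?_)
    rw [hq]; ring
  have hZY : ∫ ω, (X n ω + q * (Y n ω - X n ω)) * Y n ω ∂μ
      = 0 * a + p * bb + q * c := by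
    have h := hlin 0 p q
    rw [← h]
    refine integral_congr_ae (Filter.Eventually.of_forall fun ω => ?_)
    rw [hq]; ring
  have hXZ : ∫ ω, X n ω * (X n ω + q * (Y n ω - X n ω)) ∂μ
      = p * a + q * bb + 0 * c := by
    have h := hlin p q 0
    rw [← h]
    refine integral_congr_ae (Filter.Eventually.of_forall fun ω => ?_)
    rw [hq]; ring
  have hXX : ∫ ω, (X n ω) ^ 2 ∂μ = a := rfl
  have hYY : ∫ ω, (Y n ω) ^ 2 ∂μ = c := rfl
  -- bounds
  have hsq : ∀ (u : Ω → ℝ), (∀ ω, 0 ≤ u ω ∧ u ω ≤ 1) → ∀ ω, |u ω ^ 2| ≤ 1 :=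
    fun u hu ω => by simpa [pow_two] using habs u hu u hu ω
  -- component 0
  have comp0 : ∫ ω, (X (n + 1) ω) ^ 2 ∂μ
      = (p ^ 3 + q) * a + 2 * p ^ 2 * q * bb + p * q ^ 2 * c := by
    have e : ∀ ω, (X (n + 1) ω) ^ 2
        = if B n ω then (X n ω + q * (Y n ω - X n ω)) ^ 2 else (X n ω) ^ 2 := by
      intro ω; rw [hXe n ω]; cases hb : B n ω <;> simp [hb]
    rw [integral_congr_ae (Filter.Eventually.of_forall e),
      key _ _ (fun z : ℝ × ℝ => (z.1 + q * (z.2 - z.1)) ^ 2) (fun z : ℝ × ℝ => z.1 ^ 2)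
        ((measurable_fst.add (measurable_const.mul (measurable_snd.sub measurable_fst))).pow_const 2)
        (measurable_fst.pow_const 2)
        (fun ω => rfl) (fun ω => rfl)
        (hsq _ hZbnd) (hsq _ hXrng),
      hZZ, hXX]
    ring
  -- component 1
  have comp1 : ∫ ω, X (n + 1) ω * Y (n + 1) ω ∂μ
      = p * q * a + (p ^ 2 + q ^ 2) * bb + p * q * c := by
    have e : ∀ ω, X (n + 1) ω * Y (n + 1) ω
        = if B n ω then (X n ω + q * (Y n ω - X n ω)) * Y n ω
          else X n ω * (X n ω + q * (Y n ω - X n ω)) := by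
      intro ω; rw [hXe n ω, hYe n ω]; cases hb : B n ω <;> simp [hb]
    rw [integral_congr_ae (Filter.Eventually.of_forall e),
      key _ _ (fun z : ℝ × ℝ => (z.1 + q * (z.2 - z.1)) * z.2)
        (fun z : ℝ × ℝ => z.1 * (z.1 + q * (z.2 - z.1)))
        ((measurable_fst.add (measurable_const.mul (measurable_snd.sub measurable_fst))).mul measurable_snd)
        (measurable_fst.mul (measurable_fst.add (measurable_const.mul (measurable_snd.sub measurable_fst))))
        (fun ω => rfl) (fun ω => rfl)
        (habs _ hZbnd _ hYrng) (habs _ hXrng _ hZbnd),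
      hZY, hXZ]
    ring
  -- component 2
  have comp2 : ∫ ω, (Y (n + 1) ω) ^ 2 ∂μ
      = p ^ 2 * q * a + 2 * p * q ^ 2 * bb + (p + q ^ 3) * c := by
    have e : ∀ ω, (Y (n + 1) ω) ^ 2
        = if B n ω then (Y n ω) ^ 2 else (X n ω + q * (Y n ω - X n ω)) ^ 2 := by
      intro ω; rw [hYe n ω]; cases hb : B n ω <;> simp [hb]
    rw [integral_congr_ae (Filter.Eventually.of_forall e),
      key _ _ (fun z : ℝ × ℝ => z.2 ^ 2)
        (fun z : ℝ × ℝ => (z.1 + q * (z.2 - z.1)) ^ 2)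
        (measurable_snd.pow_const 2)
        ((measurable_fst.add (measurable_const.mul (measurable_snd.sub measurable_fst))).pow_const 2)
        (fun ω => rfl) (fun ω => rfl)
        (hsq _ hYrng) (hsq _ hZbnd),
      hYY, hZZ]
    ring
  funext i
  fin_cases i <;>
    simp [Matrix.mulVec, dotProduct, Fin.sum_univ_three, comp0, comp1, comp2]
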